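/- For t ≥ 5, the equitable dominator chromatic number of the complement of the wheel W_{1,t} equals 1 + ⌈t/2⌉, i.e., 1 + χ_ed(complement of C_t). -/

import Mathlib

open SimpleGraph Finset

/-- A coloring `c` of the vertices of `G` with exactly `k` colors is an
*equitable dominator coloring* if it is proper, every vertex dominates some
color class (every vertex of that class lies in its closed neighborhood),
and any two color classes differ in size by at most one. -/
def IsEquitableDominatorColoring {V : Type*} [Fintype V] (G : SimpleGraph V)
    (k : ℕ) (c : V → Fin k) : Prop :=
  Function.Surjective c ∧
  (∀ ⦃u v : V⦄, G.Adj u v → c u ≠ c v) ∧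
  (∀ v : V, ∃ i : Fin k, ∀ u : V, c u = i → u = v ∨ G.Adj v u) ∧
  (∀ i j : Fin k,
    (Finset.univ.filter fun v => c v = i).card ≤
      (Finset.univ.filter fun v => c v = j).card + 1)

/-- The equitable dominator chromatic number `χ_ed`. -/
noncomputable def edChromaticNumber {V : Type*} [Fintype V] (G : SimpleGraph V) : ℕ :=
  sInf {k | ∃ c : V → Fin k, IsEquitableDominatorColoring G k c}

/-- The wheel `W_{1,t}`: a cycle on `t` vertices together with a hub (`none`)
adjacent to all cycle vertices. -/
def wheel (t : ℕ) : SimpleGraph (Option (Fin t)) :=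
  SimpleGraph.fromRel (fun x y =>
    x = none ∨ y = none ∨
    (∃ i j : Fin t, x = some i ∧ y = some j ∧ (SimpleGraph.cycleGraph t).Adj i j))



lemma fin_sub_val {t : ℕ} (u v : Fin t) :
    (u - v).val = if v.val ≤ u.val then u.val - v.val else u.val + t - v.val := by
  have hv := v.isLt; have hu := u.isLt
  rw [Fin.sub_def]
  simp only
  split
  · have h : t - v.val + u.val = t + (u.val - v.val) := by omega
    rw [h, Nat.add_mod_left, Nat.mod_eq_of_lt (by omega)]
  · rw [Nat.mod_eq_of_lt (by omega)]; omega

lemma cycle_adj_iff {t : ℕ} (ht : 5 ≤ t) (u v : Fin t) :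
    (cycleGraph t).Adj u v ↔
      (u.val + 1 = v.val ∨ v.val + 1 = u.val ∨
       (u.val = 0 ∧ v.val + 1 = t) ∨ (v.val = 0 ∧ u.val + 1 = t)) := by
  have hu := u.isLt; have hv := v.isLt
  rw [cycleGraph_adj', fin_sub_val, fin_sub_val]
  split <;> split <;> omega

lemma compl_cycle_adj_iff {t : ℕ} (ht : 5 ≤ t) (u v : Fin t) :
    (cycleGraph t)ᶜ.Adj u v ↔
      (u.val ≠ v.val ∧
       ¬(u.val + 1 = v.val ∨ v.val + 1 = u.val ∨
         (u.val = 0 ∧ v.val + 1 = t) ∨ (v.val = 0 ∧ u.val + 1 = t))) := by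
  rw [compl_adj, cycle_adj_iff ht, ne_eq, Fin.ext_iff]

lemma wheel_adj_some {t : ℕ} (i j : Fin t) :
    (wheel t).Adj (some i) (some j) ↔ (cycleGraph t).Adj i j := by
  simp only [wheel, fromRel_adj, ne_eq, Option.some.injEq, reduceCtorEq, false_or,
    Option.some_inj]
  constructor
  · rintro ⟨hne, ⟨a, b, ha, hb, hab⟩ | ⟨a, b, ha, hb, hab⟩⟩
    · subst ha; subst hb; exact hab
    · subst ha; subst hb; exact hab.symm
  · intro h
    exact ⟨by simpa [Fin.ext_iff] using h.ne, Or.inl ⟨i, j, rfl, rfl, h⟩⟩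

lemma wheel_adj_none {t : ℕ} (j : Fin t) : (wheel t).Adj none (some j) := by
  refine ⟨by simp, Or.inl (Or.inl rfl)⟩

lemma compl_wheel_adj_some {t : ℕ} (i j : Fin t) :
    (wheel t)ᶜ.Adj (some i) (some j) ↔ (cycleGraph t)ᶜ.Adj i j := by
  rw [compl_adj, compl_adj, wheel_adj_some]
  simp [Option.some_inj]

lemma not_compl_wheel_adj_none {t : ℕ} (u : Option (Fin t)) :
    ¬ (wheel t)ᶜ.Adj none u := by
  cases u with
  | none => simp
  | some j => rw [compl_adj]; push_neg; intro _; exact wheel_adj_none j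

lemma exists_good_class {t : ℕ} (ht : 5 ≤ t) (v : Fin t) :
    ∃ m, m < 3 ∧ ∀ w : Fin t, w.val / 2 = m → w = v ∨ (cycleGraph t)ᶜ.Adj v w := by
  obtain ⟨p, hp⟩ : ∃ p, (v.val = 0 ∧ p + 1 = t) ∨ (0 < v.val ∧ p + 1 = v.val) := by
    rcases Nat.eq_zero_or_pos v.val with h | h
    · exact ⟨t - 1, Or.inl ⟨h, by omega⟩⟩
    · exact ⟨v.val - 1, Or.inr ⟨h, by omega⟩⟩
  obtain ⟨s, hs⟩ : ∃ s, (v.val + 1 = t ∧ s = 0) ∨ (v.val + 1 < t ∧ s = v.val + 1) := by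
    rcases Nat.lt_or_ge (v.val + 1) t with h | h
    · exact ⟨v.val + 1, Or.inr ⟨h, rfl⟩⟩
    · exact ⟨0, Or.inl ⟨by have := v.isLt; omega, rfl⟩⟩
  obtain ⟨m, hm3, hmp, hms⟩ : ∃ m, m < 3 ∧ m ≠ p / 2 ∧ m ≠ s / 2 := by
    by_cases h0 : p / 2 = 0 ∨ s / 2 = 0
    · by_cases h1 : p / 2 = 1 ∨ s / 2 = 1
      · exact ⟨2, by omega, by omega, by omega⟩
      · exact ⟨1, by omega, by omega, by omega⟩
    · exact ⟨0, by omega, by omega, by omega⟩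
  refine ⟨m, hm3, fun w hw => ?_⟩
  by_cases hwv : w = v
  · exact Or.inl hwv
  · refine Or.inr ((compl_cycle_adj_iff ht v w).2 ⟨?_, ?_⟩)
    · exact fun h => hwv (Fin.ext h.symm)
    · have hwlt := w.isLt; have hvlt := v.isLt
      omega

def cycCol (t : ℕ) (v : Fin t) : Fin ((t + 1) / 2) :=
  ⟨v.val / 2, by have := v.isLt; omega⟩

lemma cycle_mem {t : ℕ} (ht : 5 ≤ t) :
    ∃ c : Fin t → Fin ((t + 1) / 2),
      IsEquitableDominatorColoring (cycleGraph t)ᶜ ((t + 1) / 2) c := by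
  have hge1 : ∀ j : Fin ((t + 1) / 2),
      1 ≤ (univ.filter fun v : Fin t => cycCol t v = j).card := by
    intro j
    have hj := j.isLt
    refine Finset.card_pos.2 ⟨⟨2 * j.val, by omega⟩, ?_⟩
    simp only [Finset.mem_filter, Finset.mem_univ, true_and]
    exact Fin.ext (by simp [cycCol])
  refine ⟨cycCol t, ?_, ?_, ?_, ?_⟩
  · -- surjective
    intro i
    have hi := i.isLt
    exact ⟨⟨2 * i.val, by omega⟩, Fin.ext (by simp [cycCol])⟩
  · -- proper
    intro u v hadj hc
    rw [compl_cycle_adj_iff ht] at hadj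
    have := congrArg Fin.val hc
    simp only [cycCol] at this
    omega
  · -- domination
    intro v
    obtain ⟨m, hm3, hgood⟩ := exists_good_class ht v
    refine ⟨⟨m, by omega⟩, fun u hu => ?_⟩
    have : u.val / 2 = m := congrArg Fin.val hu
    exact hgood u this
  · -- equitable
    have hle2 : ∀ i : Fin ((t + 1) / 2),
        (univ.filter fun v : Fin t => cycCol t v = i).card ≤ 2 := by
      intro i
      rw [← Finset.card_image_of_injective _ Fin.val_injective]
      refine (Finset.card_le_card (t := ({2 * i.val, 2 * i.val + 1} : Finset ℕ)) ?_).trans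
        ((Finset.card_insert_le _ _).trans (by simp))
      intro x hx
      simp only [Finset.mem_image, Finset.mem_filter, Finset.mem_univ, true_and] at hx
      obtain ⟨w, hw, rfl⟩ := hx
      have : w.val / 2 = i.val := congrArg Fin.val hw
      simp only [Finset.mem_insert, Finset.mem_singleton]
      omega
    intro i j
    have h1 := hge1 j
    have h2 := hle2 i
    omega

lemma cycle_lb {t : ℕ} (ht : 5 ≤ t) (k : ℕ) (c : Fin t → Fin k)
    (hc : IsEquitableDominatorColoring (cycleGraph t)ᶜ k c) : (t + 1) / 2 ≤ k := by
  obtain ⟨hsurj, hprop, hdom, hequit⟩ := hc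
  have hle2 : ∀ i : Fin k, (univ.filter fun v => c v = i).card ≤ 2 := by
    intro i
    by_contra h
    push_neg at h
    obtain ⟨a, ha, b, hb, d, hd, hab, had, hbd⟩ := Finset.two_lt_card.1 h
    simp only [Finset.mem_filter, Finset.mem_univ, true_and] at ha hb hd
    have hadj : ∀ x y : Fin t, x ≠ y → c x = c y → (cycleGraph t).Adj x y := by
      intro x y hxy hcc
      by_contra hn
      exact hprop (((compl_adj (cycleGraph t) x y).2) ⟨hxy, hn⟩) hcc
    have h1 := (cycle_adj_iff ht a b).1 (hadj a b hab (ha.trans hb.symm))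
    have h2 := (cycle_adj_iff ht a d).1 (hadj a d had (ha.trans hd.symm))
    have h3 := (cycle_adj_iff ht b d).1 (hadj b d hbd (hb.trans hd.symm))
    have hab' : a.val ≠ b.val := fun h => hab (Fin.ext h)
    have had' : a.val ≠ d.val := fun h => had (Fin.ext h)
    have hbd' : b.val ≠ d.val := fun h => hbd (Fin.ext h)
    have := a.isLt; have := b.isLt; have := d.isLt
    omega
  have hsum : (univ : Finset (Fin t)).card
      = ∑ i : Fin k, (univ.filter fun v => c v = i).card :=
    Finset.card_eq_sum_card_fiberwise (fun x _ => Finset.mem_univ (c x))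
  have : t ≤ 2 * k := by
    have h2 : ∑ i : Fin k, (univ.filter fun v => c v = i).card ≤ ∑ _i : Fin k, 2 :=
      Finset.sum_le_sum (fun i _ => hle2 i)
    simp only [Finset.card_univ, Fintype.card_fin] at hsum
    simp only [Finset.sum_const, Finset.card_univ, Fintype.card_fin, smul_eq_mul] at h2
    omega
  omega

def whCol (t : ℕ) (o : Option (Fin t)) : Fin (1 + (t + 1) / 2) :=
  match o with
  | none => ⟨0, by omega⟩
  | some v => ⟨1 + v.val / 2, by have := v.isLt; omega⟩

lemma wheel_mem {t : ℕ} (ht : 5 ≤ t) :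
    ∃ c : Option (Fin t) → Fin (1 + (t + 1) / 2),
      IsEquitableDominatorColoring (wheel t)ᶜ (1 + (t + 1) / 2) c := by
  have hval : ∀ (v : Fin t), (whCol t (some v)).val = 1 + v.val / 2 := fun v => rfl
  have hval0 : (whCol t none).val = 0 := rfl
  refine ⟨whCol t, ?_, ?_, ?_, ?_⟩
  · -- surjective
    intro i
    have hi := i.isLt
    rcases Nat.eq_zero_or_pos i.val with h | h
    · exact ⟨none, Fin.ext (by simp [hval0, h])⟩
    · refine ⟨some ⟨2 * (i.val - 1), by omega⟩, Fin.ext ?_⟩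
      rw [hval]
      simp only
      omega
  · -- proper
    intro u v hadj hc
    match u, v with
    | none, none => exact (hadj.ne rfl).elim
    | none, some b => exact not_compl_wheel_adj_none _ hadj
    | some a, none => exact not_compl_wheel_adj_none _ hadj.symm
    | some a, some b =>
      rw [compl_wheel_adj_some, compl_cycle_adj_iff ht] at hadj
      have := congrArg Fin.val hc
      rw [hval, hval] at this
      omega
  · -- domination
    intro v
    match v with
    | none =>
      refine ⟨⟨0, by omega⟩, fun u hu => ?_⟩
      match u with
      | none => exact Or.inl rfl
      | some x =>
        have := congrArg Fin.val hu
        rw [hval] at this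
        simp only at this
        omega
    | some w =>
      obtain ⟨m, hm3, hgood⟩ := exists_good_class ht w
      refine ⟨⟨1 + m, by omega⟩, fun u hu => ?_⟩
      match u with
      | none =>
        have := congrArg Fin.val hu
        rw [hval0] at this
        simp only at this
        omega
      | some x =>
        have hx : x.val / 2 = m := by
          have := congrArg Fin.val hu
          rw [hval] at this
          simp only at this
          omega
        rcases hgood x hx with h | h
        · exact Or.inl (by rw [h])
        · exact Or.inr ((compl_wheel_adj_some w x).2 h)
  · -- equitable
    have hge1 : ∀ j : Fin (1 + (t + 1) / 2),
        1 ≤ (univ.filter fun v => whCol t v = j).card := by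
      intro j
      have hj := j.isLt
      rcases Nat.eq_zero_or_pos j.val with h | h
      · refine Finset.card_pos.2 ⟨none, ?_⟩
        simp only [Finset.mem_filter, Finset.mem_univ, true_and]
        exact Fin.ext (by rw [hval0, h])
      · refine Finset.card_pos.2 ⟨some ⟨2 * (j.val - 1), by omega⟩, ?_⟩
        simp only [Finset.mem_filter, Finset.mem_univ, true_and]
        refine Fin.ext ?_
        rw [hval]
        simp only
        omega
    have hle2 : ∀ i : Fin (1 + (t + 1) / 2),
        (univ.filter fun v => whCol t v = i).card ≤ 2 := by
      intro i
      rcases Nat.eq_zero_or_pos i.val with h | h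
      · refine le_trans (Finset.card_le_card (t := ({none} : Finset (Option (Fin t)))) ?_) (by simp)
        intro x hx
        simp only [Finset.mem_filter, Finset.mem_univ, true_and] at hx
        simp only [Finset.mem_singleton]
        match x with
        | none => rfl
        | some w =>
          have := congrArg Fin.val hx
          rw [hval] at this
          omega
      · set g : Option (Fin t) → ℕ := fun o => o.elim t Fin.val with hg
        refine Finset.card_le_card_of_injOn g ?_ ?_ |>.trans
          ((Finset.card_insert_le (2 * (i.val - 1)) ({2 * (i.val - 1) + 1} : Finset ℕ)).trans (by simp))
        · intro x hx
          simp only [Finset.mem_coe, Finset.mem_filter, Finset.mem_univ, true_and] at hx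
          match x with
          | none =>
            have := congrArg Fin.val hx
            rw [hval0] at this
            omega
          | some w =>
            have := congrArg Fin.val hx
            rw [hval] at this
            simp only [Finset.mem_coe, Finset.mem_insert, Finset.mem_singleton, hg, Option.elim]
            omega
        · intro x hx y hy hxy
          match x, y with
          | none, none => rfl
          | some a, some b =>
            simp only [hg, Option.elim] at hxy
            exact congrArg some (Fin.ext hxy)
          | none, some b => simp only [hg, Option.elim] at hxy; have := b.isLt; omega
          | some a, none => simp only [hg, Option.elim] at hxy; have := a.isLt; omega
    intro i j
    have h1 := hge1 j
    have h2 := hle2 i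
    omega

lemma wheel_lb {t : ℕ} (ht : 5 ≤ t) (k : ℕ) (c : Option (Fin t) → Fin k)
    (hc : IsEquitableDominatorColoring (wheel t)ᶜ k c) : 1 + (t + 1) / 2 ≤ k := by
  obtain ⟨hsurj, hprop, hdom, hequit⟩ := hc
  have hk : 0 < k := Fin.pos (c none)
  obtain ⟨i, hi⟩ := hdom none
  have hsub : ∀ u, c u = i → u = none :=
    fun u hu => (hi u hu).resolve_right (not_compl_wheel_adj_none u)
  have h1 : (univ.filter fun v => c v = i).card = 1 := by
    rw [Finset.card_eq_one]
    refine ⟨none, ?_⟩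
    obtain ⟨u, hu⟩ := hsurj i
    have hun := hsub u hu
    subst hun
    ext x
    simp only [Finset.mem_filter, Finset.mem_univ, true_and, Finset.mem_singleton]
    exact ⟨fun h => hsub x h, fun h => by rw [h]; exact hu⟩
  have hle2 : ∀ j : Fin k, (univ.filter fun v => c v = j).card ≤ 2 := by
    intro j
    have := hequit j i
    omega
  have hsum : (univ : Finset (Option (Fin t))).card
      = ∑ j : Fin k, (univ.filter fun v => c v = j).card :=
    Finset.card_eq_sum_card_fiberwise (fun x _ => Finset.mem_univ (c x))
  have hcardu : (univ : Finset (Option (Fin t))).card = t + 1 := by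
    simp [Fintype.card_option]
  have hsplit : ∑ j : Fin k, (univ.filter fun v => c v = j).card
      = (univ.filter fun v => c v = i).card
        + ∑ j ∈ univ.erase i, (univ.filter fun v => c v = j).card :=
    (Finset.add_sum_erase univ _ (Finset.mem_univ i)).symm
  have hbound : ∑ j ∈ univ.erase i, (univ.filter fun v => c v = j).card
      ≤ 2 * (k - 1) := by
    calc ∑ j ∈ univ.erase i, (univ.filter fun v => c v = j).card
        ≤ ∑ _j ∈ univ.erase i, 2 := Finset.sum_le_sum (fun j _ => hle2 j)
      _ = 2 * (k - 1) := by
          rw [Finset.sum_const, Finset.card_erase_of_mem (Finset.mem_univ i)]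
          simp [mul_comm]
  omega

theorem edChromaticNumber_compl_wheel (t : ℕ) (ht : 5 ≤ t) :
    edChromaticNumber (wheel t)ᶜ = 1 + (t + 1) / 2 ∧
    edChromaticNumber (wheel t)ᶜ = 1 + edChromaticNumber (SimpleGraph.cycleGraph t)ᶜ := by
  have h2 : edChromaticNumber (SimpleGraph.cycleGraph t)ᶜ = (t + 1) / 2 :=
    le_antisymm (Nat.sInf_le (cycle_mem ht))
      (le_csInf ⟨_, cycle_mem ht⟩ (fun k hk => by
        obtain ⟨c, hc⟩ := hk; exact cycle_lb ht k c hc))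
  have h1 : edChromaticNumber (wheel t)ᶜ = 1 + (t + 1) / 2 :=
    le_antisymm (Nat.sInf_le (wheel_mem ht))
      (le_csInf ⟨_, wheel_mem ht⟩ (fun k hk => by
        obtain ⟨c, hc⟩ := hk; exact wheel_lb ht k c hc))
  exact ⟨h1, by rw [h1, h2]⟩
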